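/- Let A = [X W̃]ᴴ be square and invertible with X ∈ ℂ^{M×(d₁+d₂)}, W̃ ∈ ℂ^{M×(M−d₁−d₂)}, and suppose Xᴴ W̃ = 0. Let V₁, V₂ be Hermitian positive definite, P_ℓ = V_ℓ⁻¹ X, Ṽ_ℓ = P_ℓᴴ V_ℓ P_ℓ = Xᴴ V_ℓ⁻¹ X for ℓ = 1,2, and let Ũ₁ ∈ ℂ^{(d₁+d₂)×d₁}, Ũ₂ ∈ ℂ^{(d₁+d₂)×d₂}. Then |det [P₁Ũ₁ P₂Ũ₂ W̃]| = |det A⁻¹| · |det [Ṽ₁Ũ₁ Ṽ₂Ũ₂]| · |det(W̃ᴴ W̃)|. -/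

import Mathlib

open Matrix ComplexOrder

/-- Determinant factorization used in the pairwise sub-demixing update
(equation (40)).  With `A = [X W̃]ᴴ` invertible, `Xᴴ W̃ = 0`,
`P_ℓ = V_ℓ⁻¹ X` and `Ṽ_ℓ = Xᴴ V_ℓ⁻¹ X`,
`|det [P₁Ũ₁ P₂Ũ₂ W̃]| = |det A⁻¹| · |det [Ṽ₁Ũ₁ Ṽ₂Ũ₂]| · |det(W̃ᴴ W̃)|`. -/
theorem jisa_pairwise_det_factorization {d₁ d₂ e : ℕ}
    (X : Matrix ((Fin d₁ ⊕ Fin d₂) ⊕ Fin e) (Fin d₁ ⊕ Fin d₂) ℂ)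
    (Wt : Matrix ((Fin d₁ ⊕ Fin d₂) ⊕ Fin e) (Fin e) ℂ)
    (hXrank : X.rank = d₁ + d₂) (hWtrank : Wt.rank = e)
    (horth : Xᴴ * Wt = 0)
    (hA : IsUnit ((Matrix.fromCols X Wt)ᴴ))
    (V₁ V₂ : Matrix ((Fin d₁ ⊕ Fin d₂) ⊕ Fin e) ((Fin d₁ ⊕ Fin d₂) ⊕ Fin e) ℂ)
    (hV₁ : V₁.PosDef) (hV₂ : V₂.PosDef)
    (Ut₁ : Matrix (Fin d₁ ⊕ Fin d₂) (Fin d₁) ℂ)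
    (Ut₂ : Matrix (Fin d₁ ⊕ Fin d₂) (Fin d₂) ℂ) :
    ‖(Matrix.fromCols
        (Matrix.fromCols (V₁⁻¹ * X * Ut₁) (V₂⁻¹ * X * Ut₂)) Wt).det‖
    = ‖((Matrix.fromCols X Wt)ᴴ⁻¹).det‖
      * ‖(Matrix.fromCols
          ((Xᴴ * V₁⁻¹ * X) * Ut₁) ((Xᴴ * V₂⁻¹ * X) * Ut₂)).det‖
      * ‖(Wtᴴ * Wt).det‖ := by
  set A := (Matrix.fromCols X Wt)ᴴ with hAdef
  set B := Matrix.fromCols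
      (Matrix.fromCols (V₁⁻¹ * X * Ut₁) (V₂⁻¹ * X * Ut₂)) Wt with hBdef
  have hAB : A * B = Matrix.fromBlocks
      (Matrix.fromCols ((Xᴴ * V₁⁻¹ * X) * Ut₁) ((Xᴴ * V₂⁻¹ * X) * Ut₂)) 0
      (Wtᴴ * Matrix.fromCols (V₁⁻¹ * X * Ut₁) (V₂⁻¹ * X * Ut₂)) (Wtᴴ * Wt) := by
    rw [hAdef, hBdef, Matrix.conjTranspose_fromCols_eq_fromRows_conjTranspose,
      Matrix.fromRows_mul, Matrix.mul_fromCols, horth,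
      ← Matrix.fromRows_fromCols_eq_fromBlocks, Matrix.mul_fromCols]
    simp only [Matrix.mul_fromCols, Matrix.mul_assoc]
  have hdetA : A.det ≠ 0 := (Matrix.isUnit_iff_isUnit_det A).mp hA |>.ne_zero
  have hdet : A.det * B.det = (Matrix.fromCols ((Xᴴ * V₁⁻¹ * X) * Ut₁)
        ((Xᴴ * V₂⁻¹ * X) * Ut₂)).det * (Wtᴴ * Wt).det := by
    rw [← Matrix.det_mul, hAB, Matrix.det_fromBlocks_zero₁₂]
  have hinv : A⁻¹.det = A.det⁻¹ := by
    rw [Matrix.det_nonsing_inv, Ring.inverse_eq_inv']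
  have hB : B.det = A.det⁻¹ * ((Matrix.fromCols ((Xᴴ * V₁⁻¹ * X) * Ut₁)
        ((Xᴴ * V₂⁻¹ * X) * Ut₂)).det * (Wtᴴ * Wt).det) := by
    rw [inv_mul_eq_div, eq_div_iff hdetA]
    linear_combination hdet
  rw [hB, hinv]
  simp [norm_mul, mul_assoc]
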